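/- Let each φ_i : ℝ → ℝ be convex, differentiable, and 1/γ-smooth (its derivative is 1/γ-Lipschitz). Let P(w) = (1/n)Σ_i φ_i(A_iᵀ w) + λ g(w), and let Φ(x, a, w) = (1/n)Σ_i φ_i(a_i) + λ g(w) - (1/n)Σ_i x_i(A_iᵀ w - a_i) with D(x) = min_{a,w} Φ(x,a,w). Given x, let a_i satisfy φ_i'(a_i) = -x_i for each i, and let w attain the minimum over w (i.e., Φ(x, a, w) = D(x)). Then P(w) - D(x) ≤ (1/(2nγ)) Σ_{i=1}^n (A_iᵀ w - a_i)². -/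

import Mathlib

open RealInnerProductSpace

lemma quad_aux (f f' : ℝ → ℝ) (hf : ∀ t, HasDerivAt f (f' t) t) (L : ℝ) (hL : 0 ≤ L)
    (hlip : ∀ u v, |f' u - f' v| ≤ L * |u - v|) (a u : ℝ) :
    f u - f a - f' a * (u - a) ≤ L / 2 * (u - a) ^ 2 := by
  have hcont : Continuous f' := by
    have : LipschitzWith (Real.toNNReal L) f' := by
      refine LipschitzWith.of_dist_le_mul fun p q => ?_
      rw [Real.dist_eq, Real.dist_eq, Real.coe_toNNReal _ hL]
      exact hlip p q
    exact this.continuous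
  have hint : ∀ (a b : ℝ), IntervalIntegrable f' MeasureTheory.volume a b :=
    fun a b => hcont.intervalIntegrable a b
  have key : (∫ t in a..u, f' t) = f u - f a :=
    intervalIntegral.integral_eq_sub_of_hasDerivAt (fun t _ => hf t) (hint a u)
  have hca : (∫ t in a..u, (f' t - f' a)) = f u - f a - f' a * (u - a) := by
    rw [intervalIntegral.integral_sub (hint a u) (intervalIntegrable_const), key,
      intervalIntegral.integral_const]
    simp [smul_eq_mul]
    ring
  have hquad : (∫ t in a..u, L * (t - a)) = L / 2 * (u - a) ^ 2 := by
    have h1 : (∫ t in a..u, (t - a)) = ∫ t in (a - a)..(u - a), t := by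
      rw [← intervalIntegral.integral_comp_sub_right (fun t => t) a]
    rw [intervalIntegral.integral_const_mul, h1, integral_id]
    ring
  rw [← hca, ← hquad]
  rcases le_total a u with h | h
  · apply intervalIntegral.integral_mono_on h
      ((hint a u).sub intervalIntegrable_const)
      ((continuous_const.mul (continuous_id.sub continuous_const)).intervalIntegrable a u)
    intro t ht
    have h1 := hlip t a
    have h2 : |t - a| = t - a := abs_of_nonneg (by linarith [ht.1])
    calc f' t - f' a ≤ |f' t - f' a| := le_abs_self _
      _ ≤ L * |t - a| := h1
      _ = L * (t - a) := by rw [h2]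
  · rw [intervalIntegral.integral_symm u a, intervalIntegral.integral_symm u a]
    apply neg_le_neg
    apply intervalIntegral.integral_mono_on h
      ((continuous_const.mul (continuous_id.sub continuous_const)).intervalIntegrable u a)
      ((hint u a).sub intervalIntegrable_const)
    intro t ht
    have h1 := hlip t a
    have h2 : |t - a| = -(t - a) := abs_of_nonpos (by linarith [ht.2])
    have h3 : -(f' t - f' a) ≤ |f' t - f' a| := neg_le_abs _
    simp only [Pi.mul_apply, Pi.sub_apply, id_eq]
    nlinarith [h1, h2, h3]

/-- Primal-dual gap bound: P(w) - D(x) ≤ (1/(2nγ)) Σ (A_iᵀ w - a_i)². -/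
theorem stmt_11 (d n : ℕ) (hn : 1 ≤ n)
    (A : Fin n → EuclideanSpace ℝ (Fin d))
    (lam gam : ℝ) (hlam : 0 < lam) (hgam : 0 < gam)
    (φ : Fin n → ℝ → ℝ) (φ' : Fin n → ℝ → ℝ)
    (hφconv : ∀ i, ConvexOn ℝ Set.univ (φ i))
    (hφd : ∀ i t, HasDerivAt (φ i) (φ' i t) t)
    (hφsmooth : ∀ i u v, |φ' i u - φ' i v| ≤ (1 / gam) * |u - v|)
    (g : EuclideanSpace ℝ (Fin d) → ℝ) (hg : ConvexOn ℝ Set.univ g)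
    (P : EuclideanSpace ℝ (Fin d) → ℝ)
    (hP : ∀ w, P w = (1 / n) * ∑ i, φ i ⟪A i, w⟫ + lam * g w)
    (Φ : (Fin n → ℝ) → (Fin n → ℝ) → EuclideanSpace ℝ (Fin d) → ℝ)
    (hΦ : ∀ x a w, Φ x a w = (1 / n) * ∑ i, φ i (a i) + lam * g w
      - (1 / n) * ∑ i, x i * (⟪A i, w⟫ - a i))
    (x a : Fin n → ℝ) (w : EuclideanSpace ℝ (Fin d))
    (D : ℝ) (hD : D = Φ x a w)
    (hmin : ∀ a' w', D ≤ Φ x a' w')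
    (ha : ∀ i, φ' i (a i) = - x i) :
    P w - D ≤ (1 / (2 * n * gam)) * ∑ i, (⟪A i, w⟫ - a i) ^ 2 := by
  have hn0 : (0:ℝ) < (n:ℝ) := by exact_mod_cast hn
  have hb : ∀ i, φ i ⟪A i, w⟫ - φ i (a i) + x i * (⟪A i, w⟫ - a i)
      ≤ (1 / (2 * gam)) * (⟪A i, w⟫ - a i) ^ 2 := by
    intro i
    have h := quad_aux (φ i) (φ' i) (hφd i) (1 / gam) (by positivity)
      (hφsmooth i) (a i) ⟪A i, w⟫
    rw [ha i] at h
    have e : (1:ℝ) / gam / 2 = 1 / (2 * gam) := by ring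
    rw [e] at h
    linarith
  have hsum : P w - D = (1 / n) * ∑ i, (φ i ⟪A i, w⟫ - φ i (a i)
      + x i * (⟪A i, w⟫ - a i)) := by
    rw [hP, hD, hΦ]
    rw [Finset.sum_add_distrib, Finset.sum_sub_distrib]
    ring
  rw [hsum]
  calc (1 / n) * ∑ i, (φ i ⟪A i, w⟫ - φ i (a i) + x i * (⟪A i, w⟫ - a i))
      ≤ (1 / n) * ∑ i, (1 / (2 * gam)) * (⟪A i, w⟫ - a i) ^ 2 := by
        apply mul_le_mul_of_nonneg_left (Finset.sum_le_sum fun i _ => hb i) (by positivity)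
    _ = (1 / (2 * n * gam)) * ∑ i, (⟪A i, w⟫ - a i) ^ 2 := by
        rw [Finset.mul_sum, Finset.mul_sum]
        apply Finset.sum_congr rfl
        intro i _
        ring
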